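/- For every optimal conditional machine U there exists a constant c ∈ ℕ such that for every string x and every natural number t with t ≤ C(x), there exists k ≤ |x| such that, letting y be the prefix of x of length k, |C(x|y) − t| ≤ c (difference in ℤ). -/

import Mathlib

/-- A string is a finite binary string. -/
abbrev Str : Type := List Bool

/-- A conditional machine: a partial computable function mapping a pair of
strings `(p, y)` to a string. -/
abbrev CondMachine : Type := {V : Str × Str →. Str // Partrec V}

/-- `condC V x y` is `C_V(x|y)`: the least length of a program `p` with
`V (p, y) = x`, as an element of `ℕ∞` (it is `⊤` if no such `p` exists). -/
noncomputable def condC (V : CondMachine) (x y : Str) : ℕ∞ :=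
  sInf {n : ℕ∞ | ∃ p : Str, x ∈ V.1 (p, y) ∧ (p.length : ℕ∞) = n}

/-- A conditional machine `U` is optimal if for every conditional machine `V`
there is a constant `d` with `C_U(x|y) ≤ C_V(x|y) + d` for all `x, y`. -/
def OptimalMachine (U : CondMachine) : Prop :=
  ∀ V : CondMachine, ∃ d : ℕ, ∀ x y : Str, condC U x y ≤ condC V x y + (d : ℕ∞)

/-- For an optimal machine all complexities are finite natural numbers. -/
noncomputable def KC (U : CondMachine) (x y : Str) : ℕ := (condC U x y).toNat

/-- `log2 n = Nat.log 2 (n + 2)`, so `log2 n ≥ 1`. -/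
def log2 (n : ℕ) : ℕ := Nat.log 2 (n + 2)

/- ### Auxiliary machinery -/

lemma condC_le_of_mem {V : CondMachine} {x y p : Str} (h : x ∈ V.1 (p, y)) :
    condC V x y ≤ (p.length : ℕ∞) :=
  sInf_le ⟨p, h, rfl⟩

lemma condC_attained {V : CondMachine} {x y : Str} (h : condC V x y ≠ ⊤) :
    ∃ p : Str, x ∈ V.1 (p, y) ∧ (p.length : ℕ∞) = condC V x y := by
  have hne : {n : ℕ∞ | ∃ p : Str, x ∈ V.1 (p, y) ∧ (p.length : ℕ∞) = n}.Nonempty := by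
    by_contra hempty
    rw [Set.not_nonempty_iff_eq_empty] at hempty
    simp [condC, hempty] at h
  exact csInf_mem hne

/-- The identity machine: outputs its program. -/
def Vid : CondMachine :=
  ⟨fun pq => Part.some pq.1, Computable.fst⟩

/-- The "output the condition" machine. -/
def Vself : CondMachine :=
  ⟨fun pq => Part.some pq.2, Computable.snd⟩

/-- Move one bit from the program to the condition. -/
def bitStep (pq : Str × Str) : Str × Str :=
  List.casesOn pq.1 (([] : Str), pq.2) fun b q => (q, pq.2 ++ [b])

lemma computable_bitStep : Computable bitStep := by
  have h := Primrec.list_casesOn (α := Str × Str) (β := Bool) (σ := Str × Str)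
    (f := Prod.fst) (g := fun a => (([] : Str), a.2))
    (h := fun a bl => ((bl.2 : Str), a.2 ++ [bl.1]))
    Primrec.fst (Primrec.pair (Primrec.const ([] : Str)) Primrec.snd)
    (Primrec.to₂ (Primrec.pair (Primrec.snd.comp Primrec.snd)
      ((Primrec.list_append (α := Bool)).comp (Primrec.snd.comp Primrec.fst)
        ((Primrec.list_cons (α := Bool)).comp (Primrec.fst.comp Primrec.snd)
          (Primrec.const ([] : Str))))))
  exact (h.of_eq fun a => by rcases a with ⟨p, y⟩; cases p <;> rfl).to_comp

/-- The machine that moves the first bit of the program to the end of the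
condition, then runs `U`. -/
def Vbit (U : CondMachine) : CondMachine :=
  ⟨fun pq => U.1 (bitStep pq), U.2.comp computable_bitStep⟩

lemma Vbit_apply (U : CondMachine) (b : Bool) (p y : Str) :
    (Vbit U).1 (b :: p, y) = U.1 (p, y ++ [b]) := rfl

/-- Discrete intermediate value lemma for a walk with bounded downward steps. -/
lemma walk_lemma (f : ℕ → ℕ) (n t c1 c2 : ℕ)
    (hstep : ∀ k < n, f k ≤ f (k + 1) + c1)
    (hend : f n ≤ c2) (hstart : t ≤ f 0) :
    ∃ k ≤ n, |(f k : ℤ) - (t : ℤ)| ≤ ((max c1 c2 : ℕ) : ℤ) := by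
  set c : ℕ := max c1 c2 with hc
  have hc1 : c1 ≤ c := le_max_left _ _
  have hc2 : c2 ≤ c := le_max_right _ _
  classical
  have hex : ∃ k, k ≤ n ∧ f k ≤ t + c := ⟨n, le_refl n, by omega⟩
  obtain ⟨hkn, hkle⟩ := Nat.find_spec hex
  have hmin : ∀ m, m < Nat.find hex → ¬(m ≤ n ∧ f m ≤ t + c) :=
    fun m hm => Nat.find_min hex hm
  have hfk_ge : t ≤ f (Nat.find hex) := by
    rcases Nat.eq_zero_or_pos (Nat.find hex) with hk0 | hkpos
    · rw [hk0]; exact hstart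
    · obtain ⟨j, hj⟩ := Nat.exists_eq_add_of_lt hkpos
      have hjk : j < Nat.find hex := by omega
      have hjn : j < n := lt_of_lt_of_le hjk hkn
      have hj' := hmin j hjk
      push_neg at hj'
      have hfj : t + c < f j := hj' hjn.le
      have hstepj := hstep j hjn
      have hjsucc : j + 1 = Nat.find hex := by omega
      rw [← hjsucc]
      omega
  refine ⟨Nat.find hex, hkn, ?_⟩
  have h2 : (0 : ℤ) ≤ (f (Nat.find hex) : ℤ) - t := by omega
  rw [abs_of_nonneg h2]
  omega

/-- For every string `x` and every threshold `t ≤ C(x)` there is a prefix `y`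
of `x` with `C(x|y)` within `O(1)` of `t`. -/
theorem exists_prefix_condC_close (U : CondMachine) (hU : OptimalMachine U) :
    ∃ c : ℕ, ∀ (x : Str) (t : ℕ), t ≤ KC U x [] →
      ∃ k ≤ x.length, |(KC U x (x.take k) : ℤ) - (t : ℤ)| ≤ (c : ℤ) := by
  obtain ⟨did, hid⟩ := hU Vid
  obtain ⟨dself, hself⟩ := hU Vself
  obtain ⟨dbit, hbit⟩ := hU (Vbit U)
  -- all complexities are finite
  have hfin : ∀ x y : Str, condC U x y ≠ ⊤ := by
    intro x y
    have h1 : condC U x y ≤ (x.length : ℕ∞) + did := by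
      refine le_trans (hid x y) (add_le_add_left ?_ _)
      exact condC_le_of_mem (V := Vid) (p := x) (by simp [Vid, Part.mem_some_iff])
    have hlt : ((x.length : ℕ∞) + (did : ℕ∞)) < ⊤ := by
      exact WithTop.add_lt_top.mpr ⟨WithTop.coe_lt_top _, WithTop.coe_lt_top _⟩
    exact (lt_of_le_of_lt h1 hlt).ne
  refine ⟨max (dbit + 1) dself, fun x t ht => ?_⟩
  set f : ℕ → ℕ := fun k => KC U x (x.take k) with hf
  have hcoe : ∀ k, (condC U x (x.take k)) = ((f k : ℕ) : ℕ∞) := fun k =>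
    (ENat.coe_toNat (hfin x (x.take k))).symm
  -- endpoint: f x.length ≤ dself
  have hend : f x.length ≤ dself := by
    have h1 : condC U x (x.take x.length) ≤ (dself : ℕ∞) := by
      have h2 : condC Vself x (x.take x.length) ≤ ((([] : Str)).length : ℕ∞) :=
        condC_le_of_mem (V := Vself) (p := []) (by simp [Vself, Part.mem_some_iff])
      simpa using le_trans (hself x (x.take x.length)) (add_le_add_left h2 _)
    rw [hcoe x.length] at h1
    exact_mod_cast h1
  -- step inequality
  have hstep : ∀ k < x.length, f k ≤ f (k + 1) + (dbit + 1) := by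
    intro k hk
    obtain ⟨p, hp, hplen⟩ := condC_attained (hfin x (x.take (k + 1)))
    have hmem : x ∈ (Vbit U).1 (x[k] :: p, x.take k) := by
      rw [Vbit_apply]
      have : x.take k ++ [x[k]] = x.take (k + 1) := List.take_concat_get' x k hk
      rw [this]
      exact hp
    have h1 : condC (Vbit U) x (x.take k) ≤ ((x[k] :: p).length : ℕ∞) :=
      condC_le_of_mem hmem
    have hpl : ((p.length : ℕ) : ℕ∞) = ((f (k + 1) : ℕ) : ℕ∞) := by
      rw [hplen, hcoe (k + 1)]
    have h3 : ((f k : ℕ) : ℕ∞) ≤ ((f (k + 1) + (dbit + 1) : ℕ) : ℕ∞) := by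
      rw [← hcoe k]
      refine le_trans (hbit x (x.take k)) ?_
      refine le_trans (add_le_add_left h1 _) ?_
      rw [List.length_cons]
      push_cast
      push_cast at hpl
      rw [hpl]
      ring_nf
      exact le_refl _
    exact_mod_cast h3
  -- start: t ≤ f 0
  have hstart : t ≤ f 0 := by simpa [hf] using ht
  exact walk_lemma f x.length t (dbit + 1) dself hstep hend hstart
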